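/- Let 0 < α < 2, J ≥ 1, and for j = 1,…,J let ρ_j ∈ (−1,1)∖{0}, β_j ∈ [−1,1], π_j > 0. Let m ≥ 0, h ≥ 1 be integers and N a seminorm on ℝ^{m+h+1} (coordinates indexed by i ∈ {−m,…,h}) satisfying condition (S): N(x) = 0 ⟺ x_{−m} = ⋯ = x_0 = 0. For j ∈ {1,…,J} and k ≥ −m define d_{j,k} ∈ ℝ^{m+h+1} by (d_{j,k})_i = ρ_j^{k−i} if k ≥ i and 0 otherwise, and set w_{j,θ} = (1+θβ_j)/2 for θ ∈ {−1,+1}; note d_{j,−m} = e := (1,0,…,0) for every j, and N(d_{j,k}) > 0 for all k ≥ −m. Then the Borel measure on ℝ^{m+h+1} given by Γ = Σ_{j=1}^J Σ_{θ∈{−1,+1}} Σ_{k=−m}^{∞} w_{j,θ} π_j^α N(d_{j,k})^α δ_{θ N(d_{j,k})^{-1} d_{j,k}} is equal to Σ_{θ∈{−1,+1}} [ (Σ_{j=1}^J π_j^α w_{j,θ}) N(e)^α δ_{θ N(e)^{-1} e} + Σ_{j=1}^J π_j^α ( w_{j,θ} Σ_{k=−m+1}^{h−1} N(d_{j,k})^α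 δ_{θ N(d_{j,k})^{-1} d_{j,k}} + ((1+θβ̄_j)/2) (1−|ρ_j|^α)^{-1} N(d_{j,h})^α δ_{θ N(d_{j,h})^{-1} d_{j,h}} ) ], where β̄_j = β_j (1−|ρ_j|^α)/(1−ρ_j^{⟨α⟩}) and ρ^{⟨α⟩} := sign(ρ)|ρ|^α. -/

import Mathlib

open MeasureTheory

lemma pair_swap13 (g : ℝ → ENNReal) (u : ℝ) (hu : u = 1 ∨ u = -1) :
    ∑ θ ∈ ({-1, 1} : Finset ℝ), g (θ * u) = ∑ θ ∈ ({-1, 1} : Finset ℝ), g θ := by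
  rcases hu with rfl | rfl
  · simp
  · rw [Finset.sum_pair (by norm_num : (-1:ℝ) ≠ 1), Finset.sum_pair (by norm_num : (-1:ℝ) ≠ 1)]
    norm_num [add_comm]

lemma geom_tsum13 (A b θ s : ℝ) (hA0 : 0 ≤ A) (hA1 : A < 1) (hs : s = 1 ∨ s = -1) :
    ∑' l : ℕ, ((1 + θ * s ^ l * b) / 2 * A ^ l)
      = (1 + θ * (b * (1 - A) / (1 - s * A))) / 2 * (1 - A)⁻¹ := by
  have hA : ‖A‖ < 1 := by rwa [Real.norm_eq_abs, abs_of_nonneg hA0]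
  have hsA : ‖s * A‖ < 1 := by
    rcases hs with rfl | rfl <;>
      simpa [Real.norm_eq_abs, abs_mul, abs_of_nonneg hA0] using hA1
  have hre : ∀ l : ℕ, (1 + θ * s ^ l * b) / 2 * A ^ l
      = A ^ l * (1/2) + (s*A) ^ l * (θ * b / 2) := by
    intro l; rw [mul_pow]; ring
  have s1 : Summable (fun l : ℕ => A ^ l * (1/2)) :=
    (summable_geometric_of_norm_lt_one hA).mul_right _
  have s2 : Summable (fun l : ℕ => (s*A) ^ l * (θ * b / 2)) :=
    (summable_geometric_of_norm_lt_one hsA).mul_right _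
  calc ∑' l : ℕ, ((1 + θ * s ^ l * b) / 2 * A ^ l)
      = ∑' l : ℕ, (A ^ l * (1/2) + (s*A) ^ l * (θ * b / 2)) := tsum_congr hre
    _ = (1 - A)⁻¹ * (1/2) + (1 - s*A)⁻¹ * (θ * b / 2) := by
        rw [s1.tsum_add s2, tsum_mul_right, tsum_mul_right,
          tsum_geometric_of_norm_lt_one hA, tsum_geometric_of_norm_lt_one hsA]
    _ = (1 + θ * (b * (1 - A) / (1 - s * A))) / 2 * (1 - A)⁻¹ := by
        have h1 : (1:ℝ) - A ≠ 0 := by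
          have : A < 1 := hA1; intro hc; linarith [sub_eq_zero.mp hc]
        have h2 : (1:ℝ) - s * A ≠ 0 := by
          have : s * A < 1 := lt_of_abs_lt (by rw [← Real.norm_eq_abs]; exact hsA)
          intro hc; linarith [sub_eq_zero.mp hc]
        field_simp

lemma geom_summable13 (A b θ s : ℝ) (hA0 : 0 ≤ A) (hA1 : A < 1) (hs : s = 1 ∨ s = -1) :
    Summable (fun l : ℕ => (1 + θ * s ^ l * b) / 2 * A ^ l) := by
  have hA : ‖A‖ < 1 := by rwa [Real.norm_eq_abs, abs_of_nonneg hA0]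
  have hsA : ‖s * A‖ < 1 := by
    rcases hs with rfl | rfl <;>
      simpa [Real.norm_eq_abs, abs_mul, abs_of_nonneg hA0] using hA1
  have hre : ∀ l : ℕ, (1 + θ * s ^ l * b) / 2 * A ^ l
      = A ^ l * (1/2) + (s*A) ^ l * (θ * b / 2) := by
    intro l; rw [mul_pow]; ring
  exact Summable.congr (((summable_geometric_of_norm_lt_one hA).mul_right _).add
    ((summable_geometric_of_norm_lt_one hsA).mul_right _)) (fun l => (hre l).symm)

set_option maxHeartbeats 2000000 in
theorem stmt13 (α : ℝ) (hα0 : 0 < α) (hα2 : α < 2)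
    (J : ℕ) (hJ : 1 ≤ J)
    (ρ β π : Fin J → ℝ)
    (hρ : ∀ j, ρ j ≠ 0 ∧ |ρ j| < 1)
    (hβ : ∀ j, |β j| ≤ 1) (hπ : ∀ j, 0 < π j)
    (m h : ℕ) (hh : 1 ≤ h)
    (N : Seminorm ℝ (EuclideanSpace ℝ (Fin (m + h + 1))))
    (hN : ∀ x : EuclideanSpace ℝ (Fin (m + h + 1)),
      N x = 0 ↔ ∀ i : Fin (m + h + 1), (i : ℕ) ≤ m → x i = 0)
    (D : Fin J → ℤ → EuclideanSpace ℝ (Fin (m + h + 1)))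
    (hD : ∀ (j : Fin J) (k : ℤ) (i : Fin (m + h + 1)),
      D j k i = if ((i : ℕ) : ℤ) - (m : ℤ) ≤ k
        then ρ j ^ (k + (m : ℤ) - ((i : ℕ) : ℤ)).toNat else 0)
    (e : EuclideanSpace ℝ (Fin (m + h + 1)))
    (he : ∀ i : Fin (m + h + 1), e i = if (i : ℕ) = 0 then 1 else 0) :
    Measure.sum (fun n : ℕ => ∑ j : Fin J, ∑ θ ∈ ({-1, 1} : Finset ℝ),
        ENNReal.ofReal ((1 + θ * β j) / 2 * π j ^ α * N (D j ((n : ℤ) - (m : ℤ))) ^ α)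
          • Measure.dirac ((θ * (N (D j ((n : ℤ) - (m : ℤ))))⁻¹) • D j ((n : ℤ) - (m : ℤ))))
    = ∑ θ ∈ ({-1, 1} : Finset ℝ),
        (ENNReal.ofReal ((∑ j : Fin J, π j ^ α * ((1 + θ * β j) / 2)) * N e ^ α)
            • Measure.dirac ((θ * (N e)⁻¹) • e)
          + ∑ j : Fin J,
            (ENNReal.ofReal (π j ^ α * ((1 + θ * β j) / 2))
                • ∑ k ∈ Finset.Icc (-(m : ℤ) + 1) ((h : ℤ) - 1),
                    ENNReal.ofReal (N (D j k) ^ α)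
                      • Measure.dirac ((θ * (N (D j k))⁻¹) • D j k)
              + ENNReal.ofReal (π j ^ α
                    * ((1 + θ * (β j * (1 - |ρ j| ^ α) / (1 - Real.sign (ρ j) * |ρ j| ^ α))) / 2)
                    * (1 - |ρ j| ^ α)⁻¹ * N (D j (h : ℤ)) ^ α)
                  • Measure.dirac ((θ * (N (D j (h : ℤ)))⁻¹) • D j (h : ℤ)))) := by
  refine Measure.ext fun s hs => ?_
  rw [Measure.sum_apply _ hs]
  simp only [Measure.finset_sum_apply, Measure.coe_add, Pi.add_apply, Measure.smul_apply,
    Measure.dirac_apply' _ hs, smul_eq_mul]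
  -- basic facts
  have hDe : ∀ j : Fin J, D j (-(m:ℤ)) = e := by
    intro j; ext i
    rw [hD, he]
    by_cases hi : (i:ℕ) = 0
    · rw [if_pos (by omega), if_pos hi]
      simp [hi]
    · rw [if_neg (by omega), if_neg hi]
  have hNpos : ∀ (j : Fin J) (k : ℤ), -(m:ℤ) ≤ k → 0 < N (D j k) := by
    intro j k hk
    rcases lt_or_eq_of_le (apply_nonneg N (D j k)) with hlt | heq
    · exact hlt
    · exfalso
      have hzero := (hN _).mp heq.symm ⟨0, by omega⟩ (by simp)
      rw [hD] at hzero
      rw [if_pos (by simpa using hk)] at hzero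
      exact pow_ne_zero _ (hρ j).1 hzero
  have hDshift : ∀ (j : Fin J) (l : ℕ), D j ((h:ℤ) + l) = (ρ j ^ l) • D j (h:ℤ) := by
    intro j l; ext i
    rw [PiLp.smul_apply, hD, hD, smul_eq_mul]
    have hil := i.isLt
    rw [if_pos (by omega), if_pos (by omega), ← pow_add]
    congr 1
    omega
  have hsign : ∀ j, Real.sign (ρ j) = 1 ∨ Real.sign (ρ j) = -1 := fun j =>
    (Real.sign_apply_eq_of_ne_zero _ (hρ j).1).symm
  have hsr : ∀ j, Real.sign (ρ j) * |ρ j| = ρ j := by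
    intro j
    rcases (hρ j).1.lt_or_gt with hl | hl
    · rw [Real.sign_of_neg hl, abs_of_neg hl]; ring
    · rw [Real.sign_of_pos hl, abs_of_pos hl]; ring
  have hNshift : ∀ (j : Fin J) (l : ℕ), N (D j ((h:ℤ) + l)) = |ρ j| ^ l * N (D j (h:ℤ)) := by
    intro j l
    rw [hDshift, map_smul_eq_mul, Real.norm_eq_abs, abs_pow]
  have hNα : ∀ (j : Fin J) (l : ℕ),
      N (D j ((h:ℤ) + l)) ^ α = (|ρ j| ^ α) ^ l * N (D j (h:ℤ)) ^ α := by
    intro j l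
    rw [hNshift, Real.mul_rpow (pow_nonneg (abs_nonneg _) _) (apply_nonneg _ _),
      ← Real.rpow_natCast |ρ j| l, ← Real.rpow_mul (abs_nonneg _), mul_comm (l:ℝ) α,
      Real.rpow_mul (abs_nonneg _), Real.rpow_natCast]
  have hPshift : ∀ (j : Fin J) (l : ℕ) (θ : ℝ),
      (θ * (N (D j ((h:ℤ) + l)))⁻¹) • D j ((h:ℤ) + l)
        = ((θ * Real.sign (ρ j) ^ l) * (N (D j (h:ℤ)))⁻¹) • D j (h:ℤ) := by
    intro j l θ
    rw [hNshift, hDshift, smul_smul]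
    congr 1
    have h1 : |ρ j| ^ l ≠ 0 := pow_ne_zero _ (ne_of_gt (abs_pos.mpr (hρ j).1))
    have h2 : ρ j ^ l = Real.sign (ρ j) ^ l * |ρ j| ^ l := by rw [← mul_pow, hsr]
    rw [h2, mul_inv]
    field_simp
  have hwt : ∀ (x : ℝ), |x| ≤ 1 → ∀ j, 0 ≤ (1 + x * β j) / 2 := by
    intro x hx j
    have h1 : |x * β j| ≤ 1 := by
      rw [abs_mul]
      exact mul_le_one₀ hx (abs_nonneg _) (hβ j)
    have h2 := neg_abs_le (x * β j)
    linarith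
  rw [← Summable.sum_add_tsum_nat_add' (k := m + h) ENNReal.summable]
  rw [show Finset.range (m + h) = Finset.range ((m + h - 1) + 1) from by
    rw [Nat.sub_add_cancel (by omega)]]
  rw [Finset.sum_range_succ']
  have harg : ∀ l : ℕ, ((l + (m + h) : ℕ) : ℤ) - (m : ℤ) = (h:ℤ) + (l:ℤ) := by
    intro l; push_cast; ring
  simp only [Nat.cast_zero, zero_sub, hDe, harg]
  simp only [Finset.sum_add_distrib]
  have hθabs : ∀ θ : ℝ, θ ∈ ({-1, 1} : Finset ℝ) → |θ| ≤ 1 := by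
    intro θ hθ
    simp only [Finset.mem_insert, Finset.mem_singleton] at hθ
    rcases hθ with rfl | rfl <;> norm_num
  have P0 : (∑ j : Fin J, ∑ θ ∈ ({-1, 1} : Finset ℝ),
        ENNReal.ofReal ((1 + θ * β j) / 2 * π j ^ α * N e ^ α)
          * s.indicator 1 ((θ * (N e)⁻¹) • e))
      = ∑ θ ∈ ({-1, 1} : Finset ℝ),
        ENNReal.ofReal ((∑ j : Fin J, π j ^ α * ((1 + θ * β j) / 2)) * N e ^ α)
          * s.indicator 1 ((θ * (N e)⁻¹) • e) := by
    rw [Finset.sum_comm]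
    refine Finset.sum_congr rfl fun θ hθ => ?_
    rw [show (∑ j : Fin J, π j ^ α * ((1 + θ * β j) / 2)) * N e ^ α
        = ∑ j : Fin J, π j ^ α * ((1 + θ * β j) / 2) * N e ^ α from by rw [Finset.sum_mul],
      ENNReal.ofReal_sum_of_nonneg (fun j _ => by
        exact mul_nonneg (mul_nonneg (Real.rpow_nonneg (hπ j).le α) (hwt θ (hθabs θ hθ) j))
          (Real.rpow_nonneg (apply_nonneg N e) α)),
      Finset.sum_mul]
    refine Finset.sum_congr rfl fun j _ => ?_
    congr 2
    ring
  have Pmid : (∑ n ∈ Finset.range (m + h - 1), ∑ j : Fin J, ∑ θ ∈ ({-1, 1} : Finset ℝ),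
        ENNReal.ofReal ((1 + θ * β j) / 2 * π j ^ α * N (D j (((n+1:ℕ):ℤ) - (m:ℤ))) ^ α)
          * s.indicator 1 ((θ * (N (D j (((n+1:ℕ):ℤ) - (m:ℤ))))⁻¹) • D j (((n+1:ℕ):ℤ) - (m:ℤ))))
      = ∑ θ ∈ ({-1, 1} : Finset ℝ), ∑ j : Fin J,
          ENNReal.ofReal (π j ^ α * ((1 + θ * β j) / 2))
            * ∑ k ∈ Finset.Icc (-(m:ℤ) + 1) ((h:ℤ) - 1),
                ENNReal.ofReal (N (D j k) ^ α) * s.indicator 1 ((θ * (N (D j k))⁻¹) • D j k) := by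
    rw [Finset.sum_comm]
    conv_rhs => rw [Finset.sum_comm]
    refine Finset.sum_congr rfl fun j _ => ?_
    rw [Finset.sum_comm]
    refine Finset.sum_congr rfl fun θ hθ => ?_
    rw [Finset.mul_sum]
    refine Finset.sum_nbij' (fun n => (n : ℤ) + 1 - m) (fun k => (k + m - 1).toNat)
      ?_ ?_ ?_ ?_ ?_
    · intro a ha
      simp only [Finset.mem_range] at ha
      simp only [Finset.mem_Icc]
      omega
    · intro k hk
      simp only [Finset.mem_Icc] at hk
      simp only [Finset.mem_range]
      omega
    · intro a ha
      simp only [Finset.mem_range] at ha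
      beta_reduce
      omega
    · intro k hk
      simp only [Finset.mem_Icc] at hk
      beta_reduce
      omega
    · intro n hn
      have hcast : ((n + 1 : ℕ) : ℤ) - (m : ℤ) = (n : ℤ) + 1 - m := by push_cast; ring
      rw [hcast]
      rw [show (1 + θ * β j) / 2 * π j ^ α * N (D j ((n : ℤ) + 1 - m)) ^ α
          = π j ^ α * ((1 + θ * β j) / 2) * N (D j ((n : ℤ) + 1 - m)) ^ α from by ring,
        ENNReal.ofReal_mul (mul_nonneg (Real.rpow_nonneg (hπ j).le α)
          (hwt θ (hθabs θ hθ) j)), mul_assoc]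
  have Ptail : (∑' (l : ℕ), ∑ j : Fin J, ∑ θ ∈ ({-1, 1} : Finset ℝ),
        ENNReal.ofReal ((1 + θ * β j) / 2 * π j ^ α * N (D j ((h:ℤ) + (l:ℤ))) ^ α)
          * s.indicator 1 ((θ * (N (D j ((h:ℤ) + (l:ℤ))))⁻¹) • D j ((h:ℤ) + (l:ℤ))))
      = ∑ θ ∈ ({-1, 1} : Finset ℝ), ∑ j : Fin J,
          ENNReal.ofReal (π j ^ α
              * ((1 + θ * (β j * (1 - |ρ j| ^ α) / (1 - Real.sign (ρ j) * |ρ j| ^ α))) / 2)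
              * (1 - |ρ j| ^ α)⁻¹ * N (D j (h:ℤ)) ^ α)
            * s.indicator 1 ((θ * (N (D j (h:ℤ)))⁻¹) • D j (h:ℤ)) := by
    rw [Summable.tsum_finsetSum (fun (j : Fin J) _ => ENNReal.summable)]
    conv_rhs => rw [Finset.sum_comm]
    refine Finset.sum_congr rfl fun j _ => ?_
    have hR0 : 0 ≤ |ρ j| ^ α := Real.rpow_nonneg (abs_nonneg _) α
    have hR1 : |ρ j| ^ α < 1 := Real.rpow_lt_one (abs_nonneg _) (hρ j).2 hα0
    have hu : ∀ l : ℕ, Real.sign (ρ j) ^ l = 1 ∨ Real.sign (ρ j) ^ l = -1 := by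
      intro l
      rcases hsign j with hs' | hs'
      · left; rw [hs', one_pow]
      · rw [hs']
        rcases Nat.even_or_odd l with he' | ho'
        · left; exact he'.neg_one_pow
        · right; exact ho'.neg_one_pow
    have step1 : ∀ l : ℕ,
        (∑ θ ∈ ({-1, 1} : Finset ℝ),
            ENNReal.ofReal ((1 + θ * β j) / 2 * π j ^ α * N (D j ((h:ℤ) + (l:ℤ))) ^ α)
              * s.indicator 1 ((θ * (N (D j ((h:ℤ) + (l:ℤ))))⁻¹) • D j ((h:ℤ) + (l:ℤ))))
          = ∑ θ ∈ ({-1, 1} : Finset ℝ),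
              ENNReal.ofReal ((1 + θ * Real.sign (ρ j) ^ l * β j) / 2 * (|ρ j| ^ α) ^ l
                  * (π j ^ α * N (D j (h:ℤ)) ^ α))
                * s.indicator 1 ((θ * (N (D j (h:ℤ)))⁻¹) • D j (h:ℤ)) := by
      intro l
      have huu : ∀ θ : ℝ, θ * Real.sign (ρ j) ^ l * Real.sign (ρ j) ^ l = θ := by
        intro θ
        rcases hu l with h' | h' <;> rw [h'] <;> ring
      conv_rhs => rw [← pair_swap13
        (fun x => ENNReal.ofReal ((1 + x * Real.sign (ρ j) ^ l * β j) / 2 * (|ρ j| ^ α) ^ l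
            * (π j ^ α * N (D j (h:ℤ)) ^ α))
          * s.indicator 1 ((x * (N (D j (h:ℤ)))⁻¹) • D j (h:ℤ)))
        (Real.sign (ρ j) ^ l) (hu l)]
      refine Finset.sum_congr rfl fun θ hθ => ?_
      rw [hNα j l, hPshift j l θ]
      beta_reduce
      rw [huu θ]
      congr 1
      congr 1
      ring
    rw [tsum_congr step1, Summable.tsum_finsetSum (fun (θ : ℝ) _ => ENNReal.summable)]
    refine Finset.sum_congr rfl fun θ hθ => ?_
    rw [ENNReal.tsum_mul_right]
    congr 1
    have hgnn : ∀ l : ℕ, 0 ≤ (1 + θ * Real.sign (ρ j) ^ l * β j) / 2 * (|ρ j| ^ α) ^ l := by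
      intro l
      refine mul_nonneg (hwt _ ?_ j) (pow_nonneg hR0 l)
      rw [abs_mul]
      rcases hu l with h' | h' <;> rw [h'] <;> simpa using hθabs θ hθ
    have hsplit : ∀ l : ℕ,
        ENNReal.ofReal ((1 + θ * Real.sign (ρ j) ^ l * β j) / 2 * (|ρ j| ^ α) ^ l
            * (π j ^ α * N (D j (h:ℤ)) ^ α))
          = ENNReal.ofReal ((1 + θ * Real.sign (ρ j) ^ l * β j) / 2 * (|ρ j| ^ α) ^ l)
            * ENNReal.ofReal (π j ^ α * N (D j (h:ℤ)) ^ α) :=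
      fun l => ENNReal.ofReal_mul (hgnn l)
    rw [tsum_congr hsplit, ENNReal.tsum_mul_right,
      ← ENNReal.ofReal_tsum_of_nonneg hgnn
        (geom_summable13 (|ρ j| ^ α) (β j) θ (Real.sign (ρ j)) hR0 hR1 (hsign j)),
      ← ENNReal.ofReal_mul (tsum_nonneg (fun l => hgnn l))]
    congr 1
    rw [geom_tsum13 (|ρ j| ^ α) (β j) θ (Real.sign (ρ j)) hR0 hR1 (hsign j)]
    ring
  rw [P0, Pmid, Ptail]
  abel
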